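/- For every prime p, 8p^4 + 2p^2 + 2p + 6 - (32p^8 + 2p^4 + 4p^3 + 18p^2 + 16p + 32)/(4p^4 + p^2 + p + 4) = (16p^6 + 16p^5 + 56p^4 - 2p^2 - 2p - 8)/(4p^4 + p^2 + p + 4) > 0; hence B(D_{2p^2}) is neither L-hyperenergetic nor Q-hyperenergetic. -/
import Mathlib


theorem B_D2p2_not_L_hyperenergetic (p : ℕ) (hp : p.Prime) :
    8 * (p : ℝ) ^ 4 + 2 * (p : ℝ) ^ 2 + 2 * (p : ℝ) + 6
        - (32 * (p : ℝ) ^ 8 + 2 * (p : ℝ) ^ 4 + 4 * (p : ℝ) ^ 3 + 18 * (p : ℝ) ^ 2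
            + 16 * (p : ℝ) + 32) / (4 * (p : ℝ) ^ 4 + (p : ℝ) ^ 2 + (p : ℝ) + 4)
      = (16 * (p : ℝ) ^ 6 + 16 * (p : ℝ) ^ 5 + 56 * (p : ℝ) ^ 4 - 2 * (p : ℝ) ^ 2
          - 2 * (p : ℝ) - 8) / (4 * (p : ℝ) ^ 4 + (p : ℝ) ^ 2 + (p : ℝ) + 4) ∧
      (16 * (p : ℝ) ^ 6 + 16 * (p : ℝ) ^ 5 + 56 * (p : ℝ) ^ 4 - 2 * (p : ℝ) ^ 2
          - 2 * (p : ℝ) - 8) / (4 * (p : ℝ) ^ 4 + (p : ℝ) ^ 2 + (p : ℝ) + 4) > 0 := by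
  have hp2 : (2 : ℝ) ≤ (p : ℝ) := by exact_mod_cast hp.two_le
  have hppos : (0 : ℝ) < p := by linarith
  have hden : (0 : ℝ) < 4 * (p : ℝ) ^ 4 + (p : ℝ) ^ 2 + (p : ℝ) + 4 := by positivity
  constructor
  · field_simp
    ring
  · apply div_pos _ hden
    nlinarith [pow_le_pow_left₀ (by norm_num : (0:ℝ) ≤ 2) hp2 4,
      sq_nonneg ((p:ℝ)^2), sq_nonneg ((p:ℝ)^3), pow_pos hppos 4, pow_pos hppos 5, pow_pos hppos 6]
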